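/- Consistency of the Lagrange–Gauss–Radau identity used in the uniqueness proof: if u, v are polynomials of degree ≤ k on I_n with Q_n(⟨u' − v, φ⟩) + ⟨u⁺(t_{n-1}), φ⁺(t_{n-1})⟩ = 0 for all polynomial test functions φ of degree ≤ k with values in a finite-dimensional inner product space, then at each Gauss–Radau node t_{n,l}, u'(t_{n,l}) − v(t_{n,l}) = c_{n,l} u⁺(t_{n-1}) with c_{n,l} = 2 τ_n^{-1} (ω_l)^{-1} ξ_{n,l}(t_{n-1}), where ξ_{n,l} is the l-th Lagrange basis polynomial at the Gauss–Radau nodes. -/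

import Mathlib

open Polynomial Finset in
/-- Gauss–Radau/Lagrange identity used in the uniqueness proof. -/
theorem gauss_radau_lagrange_identity
    {H : Type*} [NormedAddCommGroup H] [InnerProductSpace ℝ H] [FiniteDimensional ℝ H]
    (k : ℕ) (a b : ℝ) (hab : a < b)
    (t : Fin (k + 1) → ℝ) (ht : ∀ μ, t μ ∈ Set.Ioc a b) (htinj : Function.Injective t)
    (ω : Fin (k + 1) → ℝ) (hω : ∀ μ, 0 < ω μ)
    (ξ : Fin (k + 1) → ℝ → ℝ)
    (hξ : ∀ l x, ξ l x = ∏ i ∈ Finset.univ.erase l, (x - t i) / (t l - t i))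
    (U V : Fin (k + 1) → H) (u v : ℝ → H)
    (hu : ∀ x, u x = ∑ j : Fin (k + 1), x ^ (j : ℕ) • U j)
    (hv : ∀ x, v x = ∑ j : Fin (k + 1), x ^ (j : ℕ) • V j)
    (hvar : ∀ Φ : Fin (k + 1) → H,
      (b - a) / 2 * (∑ μ, ω μ *
          (inner ℝ (deriv u (t μ) - v (t μ)) (∑ j : Fin (k + 1), (t μ) ^ (j : ℕ) • Φ j) : ℝ))
        + (inner ℝ (u a) (∑ j : Fin (k + 1), a ^ (j : ℕ) • Φ j) : ℝ) = 0) :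
    ∀ l, v (t l) - deriv u (t l) = ((2 / ((b - a) * ω l)) * ξ l a) • u a := by
  intro l
  set q : Polynomial ℝ := ∏ i ∈ Finset.univ.erase l, (X - C (t i)) with hq
  set d : ℝ := ∏ i ∈ Finset.univ.erase l, (t l - t i) with hdd
  have hd : d ≠ 0 := by
    rw [hdd]
    apply Finset.prod_ne_zero_iff.mpr
    intro i hi
    exact sub_ne_zero.mpr fun h => (Finset.mem_erase.mp hi).1 (htinj h).symm
  have hqdeg : q.natDegree < k + 1 := by
    have h1 : q.natDegree = (Finset.univ.erase l).card := by
      rw [hq, Polynomial.natDegree_prod_of_monic _ _ (fun i _ => Polynomial.monic_X_sub_C _)]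
      simp
    rw [h1, Finset.card_erase_of_mem (Finset.mem_univ l), Finset.card_univ, Fintype.card_fin]
    omega
  have heval : ∀ x : ℝ, (∑ j : Fin (k+1), x ^ (j:ℕ) * q.coeff j) = q.eval x := by
    intro x
    rw [Polynomial.eval_eq_sum_range' hqdeg, Fin.sum_univ_eq_sum_range
      (fun j => x ^ j * q.coeff j)]
    exact Finset.sum_congr rfl fun i _ => mul_comm _ _
  have hqe : ∀ x : ℝ, q.eval x = ∏ i ∈ Finset.univ.erase l, (x - t i) := by
    intro x; rw [hq]; simp [Polynomial.eval_prod]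
  have hξq : ∀ x : ℝ, ξ l x = q.eval x / d := by
    intro x
    rw [hξ, hqe, hdd, Finset.prod_div_distrib]
  have hξnode : ∀ μ, μ ≠ l → ξ l (t μ) = 0 := by
    intro μ hμ
    rw [hξq, hqe]
    rw [Finset.prod_eq_zero (Finset.mem_erase.mpr ⟨hμ, Finset.mem_univ μ⟩) (by ring)]
    simp
  have hξl : ξ l (t l) = 1 := by
    rw [hξ]
    exact Finset.prod_eq_one fun i hi => div_self
      (sub_ne_zero.mpr fun h => (Finset.mem_erase.mp hi).1 (htinj h).symm)
  -- key scalar identity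
  have key : ∀ h : H,
      ((b - a) / 2 * ω l) * (inner ℝ (deriv u (t l) - v (t l)) h : ℝ)
        + ξ l a * (inner ℝ (u a) h : ℝ) = 0 := by
    intro h
    have hv0 := hvar (fun j => (q.coeff j / d) • h)
    have hΦ : ∀ x : ℝ, (∑ j : Fin (k+1), x ^ (j:ℕ) • ((q.coeff j / d) • h)) = ξ l x • h := by
      intro x
      rw [hξq]
      simp only [smul_smul]
      rw [← Finset.sum_smul, ← heval x, Finset.sum_div]
      congr 1
      exact Finset.sum_congr rfl fun j _ => by ring
    simp only [hΦ] at hv0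
    have hsum : (∑ μ, ω μ *
        (inner ℝ (deriv u (t μ) - v (t μ)) (ξ l (t μ) • h) : ℝ))
        = ω l * (inner ℝ (deriv u (t l) - v (t l)) h : ℝ) := by
      rw [Finset.sum_eq_single l]
      · rw [hξl, one_smul]
      · intro μ _ hμ
        rw [hξnode μ hμ, zero_smul, inner_zero_right, mul_zero]
      · intro hl; exact absurd (Finset.mem_univ l) hl
    rw [hsum, real_inner_smul_right] at hv0
    linarith [hv0]
  -- conclude the vector identity
  have hw : ((b - a) / 2 * ω l) • (deriv u (t l) - v (t l)) + (ξ l a) • u a = 0 := by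
    set w : H := ((b - a) / 2 * ω l) • (deriv u (t l) - v (t l)) + (ξ l a) • u a with hwdef
    have : (inner ℝ w w : ℝ) = 0 := by
      rw [hwdef, inner_add_left, real_inner_smul_left, real_inner_smul_left]
      exact key w
    exact inner_self_eq_zero.mp this
  have hc : (b - a) / 2 * ω l ≠ 0 := by
    have hba' : (0:ℝ) < b - a := by linarith
    exact mul_ne_zero (div_ne_zero (ne_of_gt hba') two_ne_zero) (ne_of_gt (hω l))
  have h1 : (deriv u (t l) - v (t l)) = -(((b - a) / 2 * ω l)⁻¹ * ξ l a) • u a := by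
    have := hw
    rw [add_eq_zero_iff_eq_neg] at this
    calc deriv u (t l) - v (t l)
        = ((b - a) / 2 * ω l)⁻¹ • (((b - a) / 2 * ω l) • (deriv u (t l) - v (t l))) := by
          rw [smul_smul, inv_mul_cancel₀ hc, one_smul]
      _ = ((b - a) / 2 * ω l)⁻¹ • (-((ξ l a) • u a)) := by rw [this]
      _ = -(((b - a) / 2 * ω l)⁻¹ * ξ l a) • u a := by
          rw [smul_neg, smul_smul, neg_smul]
  have h2 : v (t l) - deriv u (t l) = (((b - a) / 2 * ω l)⁻¹ * ξ l a) • u a := by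
    rw [show v (t l) - deriv u (t l) = -(deriv u (t l) - v (t l)) by abel, h1, neg_smul, neg_neg]
  rw [h2]
  congr 1
  have hba : b - a ≠ 0 := by linarith
  have hωl : ω l ≠ 0 := ne_of_gt (hω l)
  field_simp
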